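/- (Causality) Let H be a complex Hilbert space, let M₀, M₁ : H → H be bounded linear operators with M₀ selfadjoint, such that ρM₀ + Re M₁ ≥ c for some c ∈ ]0,∞[ and all sufficiently large ρ ∈ ]0,∞[, and let A : D(A) ⊆ H → H be skew-selfadjoint. Then for all sufficiently large ρ ∈ ]0,∞[ and all a ∈ ℝ: χ_{(−∞,a]}(closure(∂₀M₀ + M₁ + A))⁻¹ = χ_{(−∞,a]}(closure(∂₀M₀ + M₁ + A))⁻¹ χ_{(−∞,a]}, i.e. the solution operator is causal. -/

import Mathlib

/-!
STATEMENT 6 (Causality): If `ρM₀ + Re M₁ ≥ c > 0` for all sufficiently large `ρ > 0`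
and `A` is skew-selfadjoint, then for all sufficiently large `ρ > 0` and all `a ∈ ℝ`
the solution operator `(closure(∂₀M₀ + M₁ + A))⁻¹` is causal:
`χ_{(-∞,a]} (closure(∂₀M₀ + M₁ + A))⁻¹ = χ_{(-∞,a]} (closure(∂₀M₀ + M₁ + A))⁻¹ χ_{(-∞,a]}`.
-/

noncomputable section
open MeasureTheory Filter Topology Set

/-- The exponentially weighted Lebesgue measure `exp(-2ρt) dt` on `ℝ`. -/
def wMeasure (ρ : ℝ) : Measure ℝ :=
  volume.withDensity fun t => ENNReal.ofReal (Real.exp (-2 * ρ * t))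

/-- The weighted space `H_ρ(ℝ,H)`. -/
abbrev Hw (H : Type*) [NormedAddCommGroup H] (ρ : ℝ) : Type _ := Lp H 2 (wMeasure ρ)

variable {H : Type*} [NormedAddCommGroup H] [InnerProductSpace ℂ H] [CompleteSpace H]

/-- `D` is `∂₀`, i.e. the closure in `H_ρ(ℝ,H)` of differentiation on `C¹` compactly
supported functions: its graph is the closure of the graph of the classical
derivative on `C¹` compactly supported functions. -/
def IsTimeDeriv (ρ : ℝ) (D : Hw H ρ →ₗ.[ℂ] Hw H ρ) : Prop :=
  (D.graph : Set (Hw H ρ × Hw H ρ)) = closure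
    {p : Hw H ρ × Hw H ρ | ∃ g : ℝ → H, ContDiff ℝ 1 g ∧ HasCompactSupport g ∧
      ⇑p.1 =ᵐ[wMeasure ρ] g ∧ ⇑p.2 =ᵐ[wMeasure ρ] deriv g}

/-- `Al` is the pointwise lift to `H_ρ(ℝ,H)` of the (possibly unbounded) operator `A`
on `H`: its domain is `{u : u(t) ∈ D(A) a.e. and (t ↦ A u(t)) ∈ H_ρ(ℝ,H)}` and it acts
as `(Al u)(t) = A (u(t))`. -/
def IsPointwiseLift (ρ : ℝ) (A : H →ₗ.[ℂ] H) (Al : Hw H ρ →ₗ.[ℂ] Hw H ρ) : Prop :=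
  ∀ u v : Hw H ρ, (u, v) ∈ Al.graph ↔
    ∀ᵐ t ∂(wMeasure ρ), ∃ h : u t ∈ A.domain, A ⟨u t, h⟩ = v t

/-- A densely defined closed operator `A` is skew-selfadjoint if `A* = -A`. -/
def IsSkewSelfAdjointP (A : H →ₗ.[ℂ] H) : Prop :=
  Dense (A.domain : Set H) ∧ A.IsClosed ∧ A.adjoint = -A

/-- The real part `(1/2)(M + M*)` of a bounded operator. -/
def reOp (M : H →L[ℂ] H) : H →L[ℂ] H := (2 : ℂ)⁻¹ • (M + ContinuousLinearMap.adjoint M)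

/-- The pointwise (in time) lift of a bounded operator on `H` to `H_ρ(ℝ,H)`. -/
def liftL (ρ : ℝ) (M : H →L[ℂ] H) : Hw H ρ →L[ℂ] Hw H ρ :=
  ContinuousLinearMap.compLpL 2 (wMeasure ρ) M

/-- The operator `∂₀M₀ + M₁ + A` with domain `D(∂₀) ∩ D(A)` in `H_ρ(ℝ,H)`,
where `D` plays the role of `∂₀` and `Al` the role of (the lift of) `A`. -/
def evo (ρ : ℝ) (M0 M1 : H →L[ℂ] H) (D Al : Hw H ρ →ₗ.[ℂ] Hw H ρ) :
    Hw H ρ →ₗ.[ℂ] Hw H ρ :=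
  ((liftL ρ M1 : Hw H ρ →ₗ[ℂ] Hw H ρ)) +ᵥ
    ((⟨D.domain, ((liftL ρ M0 : Hw H ρ →ₗ[ℂ] Hw H ρ)).comp D.toFun⟩ : Hw H ρ →ₗ.[ℂ] Hw H ρ)
      + Al)

/-- `S` is the everywhere defined continuous inverse of the operator `T`. -/
def IsInverseOf {E : Type*} [NormedAddCommGroup E] [NormedSpace ℂ E]
    (S : E →L[ℂ] E) (T : E →ₗ.[ℂ] E) : Prop :=
  (∀ f : E, (S f, f) ∈ T.graph) ∧ ∀ u : T.domain, S (T u) = u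

/-- `χ` is the temporal cut-off operator, i.e. multiplication by the characteristic
function of the time interval `(-∞, a]`. -/
def IsCutoff (ρ a : ℝ) (χ : Hw H ρ →L[ℂ] Hw H ρ) : Prop :=
  ∀ u : Hw H ρ, ⇑(χ u) =ᵐ[wMeasure ρ] Set.indicator (Set.Iic a) ⇑u

set_option linter.unusedSectionVars false

section Helpers

variable {ρ a : ℝ} {χ : Hw H ρ →L[ℂ] Hw H ρ}

lemma setIntegral_wMeasure (ρ : ℝ) {s : Set ℝ} (hs : MeasurableSet s) (f : ℝ → ℝ) :
    ∫ t in s, f t ∂(wMeasure ρ) = ∫ t in s, Real.exp (-2 * ρ * t) * f t := by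
  rw [wMeasure, restrict_withDensity hs]
  rw [show (fun t => ENNReal.ofReal (Real.exp (-2 * ρ * t)))
      = fun t => (((Real.exp (-2 * ρ * t)).toNNReal : NNReal) : ENNReal) from rfl]
  have hmeas : Measurable fun t : ℝ => (Real.exp (-2 * ρ * t)).toNNReal :=
    Measurable.real_toNNReal (by fun_prop)
  rw [integral_withDensity_eq_integral_smul hmeas f]
  refine integral_congr_ae (Eventually.of_forall fun t => ?_)
  simp only [NNReal.smul_def, Real.coe_toNNReal _ (Real.exp_nonneg _), smul_eq_mul]

lemma cutoff_inner (hχ : IsCutoff ρ a χ) (u w : Hw H ρ) :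
    (inner ℂ (χ u) w : ℂ) = ∫ t in Iic a, (inner ℂ (u t) (w t) : ℂ) ∂(wMeasure ρ) := by
  rw [L2.inner_def, ← integral_indicator measurableSet_Iic]
  refine integral_congr_ae ?_
  filter_upwards [hχ u] with t ht
  rw [ht]
  by_cases h : t ∈ Iic a <;>
    simp [Set.indicator_of_mem, Set.indicator_of_notMem, h]

lemma cutoff_integrable (hχ : IsCutoff ρ a χ) (u w : Hw H ρ) :
    IntegrableOn (fun t => (inner ℂ (u t) (w t) : ℂ)) (Iic a) (wMeasure ρ) := by
  have h := (L2.integrable_inner (𝕜 := ℂ) (χ u) w).restrict (s := Iic a)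
  refine h.congr ?_
  refine (ae_restrict_iff' measurableSet_Iic).2 ?_
  filter_upwards [hχ u] with t ht hta
  rw [ht, Set.indicator_of_mem hta]

lemma cutoff_re_inner (hχ : IsCutoff ρ a χ) (u w : Hw H ρ) :
    (inner ℂ (χ u) w : ℂ).re = ∫ t in Iic a, (inner ℂ (u t) (w t) : ℂ).re ∂(wMeasure ρ) := by
  rw [cutoff_inner hχ u w]
  rw [← RCLike.re_to_complex, ← integral_re (cutoff_integrable hχ u w)]
  simp [RCLike.re_to_complex]

lemma reOp_re (M : H →L[ℂ] H) (y : H) :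
    (inner ℂ y ((reOp M) y) : ℂ).re = (inner ℂ y (M y) : ℂ).re := by
  have h : (inner ℂ y ((ContinuousLinearMap.adjoint M) y) : ℂ)
      = starRingEnd ℂ (inner ℂ y (M y) : ℂ) := by
    rw [ContinuousLinearMap.adjoint_inner_right, ← inner_conj_symm]
  simp only [reOp, ContinuousLinearMap.smul_apply, ContinuousLinearMap.add_apply,
    inner_smul_right, inner_add_right, h]
  rw [Complex.add_conj]
  simp

lemma M0_nonneg {M0 M1 : H →L[ℂ] H} {c : ℝ}
    (hpos : ∃ ρ₀ > (0 : ℝ), ∀ ρ ∈ Set.Ioi ρ₀, ∀ x : H,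
      c * ‖x‖ ^ 2 ≤ (inner ℂ x (((ρ : ℂ) • M0 + reOp M1) x) : ℂ).re) (x : H) :
    0 ≤ (inner ℂ x (M0 x) : ℂ).re := by
  obtain ⟨ρ₀, hρ₀, h⟩ := hpos
  have key : ∀ ρ ∈ Set.Ioi ρ₀, (c * ‖x‖ ^ 2 - (inner ℂ x ((reOp M1) x) : ℂ).re) / ρ
      ≤ (inner ℂ x (M0 x) : ℂ).re := by
    intro ρ hρ
    have hρpos : (0:ℝ) < ρ := lt_trans hρ₀ hρ
    have h1 := h ρ hρ x
    rw [ContinuousLinearMap.add_apply, inner_add_right, ContinuousLinearMap.smul_apply,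
      inner_smul_right] at h1
    rw [div_le_iff₀ hρpos]
    have : ((ρ:ℂ) * inner ℂ x (M0 x)).re = ρ * (inner ℂ x (M0 x) : ℂ).re := by
      simp [Complex.mul_re]
    simp only [Complex.add_re, this] at h1
    linarith [h1]
  refine le_of_tendsto (f := fun ρ : ℝ => (c * ‖x‖ ^ 2 - (inner ℂ x ((reOp M1) x) : ℂ).re) / ρ)
    (x := atTop) ?_ ?_
  · have := (tendsto_inv_atTop_zero (𝕜 := ℝ)).const_mul
      (c * ‖x‖ ^ 2 - (inner ℂ x ((reOp M1) x) : ℂ).re)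
    simpa [div_eq_mul_inv] using this
  · filter_upwards [eventually_gt_atTop ρ₀] with ρ hρ using key ρ hρ

lemma skew_re {A : H →ₗ.[ℂ] H} (hA : IsSkewSelfAdjointP A) (x : A.domain) :
    (inner ℂ (x : H) (A x) : ℂ).re = 0 := by
  have hF : A.adjoint.IsFormalAdjoint A := LinearPMap.adjoint_isFormalAdjoint hA.1
  rw [hA.2.2] at hF
  have h := hF x x
  rw [LinearPMap.neg_apply] at h
  have e1 : (inner ℂ ((A x : H)) ((x : H)) : ℂ) = (starRingEnd ℂ) (inner ℂ (x : H) (A x)) :=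
    (inner_conj_symm _ _).symm
  have e2 : -(inner ℂ ((A x : H)) ((x : H)) : ℂ) = inner ℂ (x : H) (A x) := by
    rw [← inner_neg_left]; exact h
  have e3 : (inner ℂ (x : H) (A x) : ℂ) = -(starRingEnd ℂ) (inner ℂ (x : H) (A x)) := by
    linear_combination -e1 - e2
  have e4 := congrArg Complex.re e3
  rw [Complex.neg_re, Complex.conj_re] at e4
  linarith

lemma ibp {M0 : H →L[ℂ] H} (hsa : IsSelfAdjoint M0)
    (hpos0 : ∀ x : H, 0 ≤ (inner ℂ x (M0 x) : ℂ).re)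
    (ρ a : ℝ) {g : ℝ → H} (hg : ContDiff ℝ 1 g) (hgs : HasCompactSupport g) :
    ρ * ∫ t in Iic a, Real.exp (-2 * ρ * t) * (inner ℂ (g t) (M0 (g t)) : ℂ).re
      ≤ ∫ t in Iic a, Real.exp (-2 * ρ * t) * (inner ℂ (g t) (M0 (deriv g t)) : ℂ).re := by
  have hsa' : ContinuousLinearMap.adjoint M0 = M0 :=
    ContinuousLinearMap.isSelfAdjoint_iff'.mp hsa
  set φ : ℝ → ℝ := fun t => (inner ℂ (g t) (M0 (g t)) : ℂ).re with hφdef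
  set G1 : ℝ → ℝ := fun t => Real.exp (-2 * ρ * t) * (inner ℂ (g t) (M0 (deriv g t)) : ℂ).re
    with hG1def
  set G2 : ℝ → ℝ := fun t => Real.exp (-2 * ρ * t) * φ t with hG2def
  set F' : ℝ → ℝ := fun t => (-2 * ρ) * G2 t + 2 * G1 t with hF'def
  have hgc : Continuous g := hg.continuous
  have hg'c : Continuous (deriv g) := hg.continuous_deriv le_rfl
  have hd : ∀ t, HasDerivAt g (deriv g t) t := fun t => (hg.differentiable one_ne_zero t).hasDerivAt
  have hMd : ∀ t, HasDerivAt (fun s => M0 (g s)) (M0 (deriv g t)) t := fun t =>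
    ((M0.restrictScalars ℝ).hasFDerivAt.comp_hasDerivAt t (hd t))
  have hinner : ∀ t, HasDerivAt (fun s => (inner ℂ (g s) (M0 (g s)) : ℂ))
      ((inner ℂ (g t) (M0 (deriv g t)) : ℂ) + inner ℂ (deriv g t) (M0 (g t))) t := fun t =>
    (hd t).inner ℂ (hMd t)
  have key : ∀ t, ((inner ℂ (g t) (M0 (deriv g t)) : ℂ) + inner ℂ (deriv g t) (M0 (g t))).re
      = 2 * (inner ℂ (g t) (M0 (deriv g t)) : ℂ).re := by
    intro t
    have h1 : (inner ℂ (deriv g t) (M0 (g t)) : ℂ)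
        = starRingEnd ℂ (inner ℂ (g t) (M0 (deriv g t))) := by
      conv_lhs => rw [← hsa', ContinuousLinearMap.adjoint_inner_right, ← inner_conj_symm]
    rw [Complex.add_re, h1, Complex.conj_re]; ring
  have hφd : ∀ t, HasDerivAt φ (2 * (inner ℂ (g t) (M0 (deriv g t)) : ℂ).re) t := by
    intro t
    have := Complex.reCLM.hasFDerivAt.comp_hasDerivAt t (hinner t)
    simp only [Function.comp_def, Complex.reCLM_apply, key t] at this
    exact this
  have hexp : ∀ t : ℝ, HasDerivAt (fun s => Real.exp (-2 * ρ * s))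
      ((-2 * ρ) * Real.exp (-2 * ρ * t)) t := by
    intro t
    have h0 : HasDerivAt (fun s : ℝ => -2 * ρ * s) (-2 * ρ) t := by
      simpa using (hasDerivAt_id t).const_mul (-2 * ρ)
    simpa [mul_comm] using h0.exp
  have hFd : ∀ t, HasDerivAt G2 (F' t) t := by
    intro t
    have := (hexp t).mul (hφd t)
    simp only [hF'def, hG1def, hG2def]
    exact this.congr_deriv (by ring)
  -- support and integrability
  have hzero : ∀ t, t ∉ tsupport g → φ t = 0 := by
    intro t ht
    simp [hφdef, image_eq_zero_of_notMem_tsupport ht]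
  have hzero' : ∀ t, t ∉ tsupport g → F' t = 0 := by
    intro t ht
    simp [hF'def, hG1def, hG2def, hzero t ht, image_eq_zero_of_notMem_tsupport ht]
  have hG1c : Continuous G1 := by
    apply Continuous.mul (by fun_prop)
    exact Complex.continuous_re.comp (Continuous.inner hgc (M0.continuous.comp hg'c))
  have hG2c : Continuous G2 := by
    apply Continuous.mul (by fun_prop)
    exact Complex.continuous_re.comp (Continuous.inner hgc (M0.continuous.comp hgc))
  have hF'c : Continuous F' := (continuous_const.mul hG2c).add (continuous_const.mul hG1c)
  have hG1s : HasCompactSupport G1 := by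
    apply hgs.mono'
    intro t ht
    contrapose! ht
    simp [hG1def, Function.mem_support, image_eq_zero_of_notMem_tsupport ht]
  have hG2s : HasCompactSupport G2 := by
    apply hgs.mono'
    intro t ht
    contrapose! ht
    simp [hG2def, Function.mem_support, hzero t ht]
  have hF's : HasCompactSupport F' := by
    apply hgs.mono'
    intro t ht
    contrapose! ht
    simp [Function.mem_support, hzero' t ht]
  have hG1i : Integrable G1 := hG1c.integrable_of_hasCompactSupport hG1s
  have hG2i : Integrable G2 := hG2c.integrable_of_hasCompactSupport hG2s
  have hF'i : Integrable F' := hF'c.integrable_of_hasCompactSupport hF's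
  -- lower bound for t near -∞
  obtain ⟨r, hr⟩ := hgs.isBounded.subset_closedBall (0 : ℝ)
  set b : ℝ := min a (-(r + 1)) with hbdef
  have hb : b ≤ a := min_le_left _ _
  have hgb : ∀ t : ℝ, t ≤ -(r+1) → t ∉ tsupport g := by
    intro t ht hmem
    have h1 := hr hmem
    rw [Metric.mem_closedBall, Real.dist_eq, sub_zero] at h1
    have := (abs_le.mp h1).1
    linarith
  -- compute the integral of F' over Iic a
  have hsplit : ∫ t in Iic a, F' t = (∫ t in Iic b, F' t) + ∫ t in Ioc b a, F' t := by
    rw [← setIntegral_union (Set.Iic_disjoint_Ioc le_rfl) measurableSet_Ioc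
      hF'i.integrableOn hF'i.integrableOn, Set.Iic_union_Ioc_eq_Iic hb]
  have hIic0 : ∫ t in Iic b, F' t = 0 := by
    rw [setIntegral_congr_fun measurableSet_Iic
      (fun t (ht : t ∈ Iic b) => hzero' t (hgb t (le_trans ht (min_le_right _ _))))]
    simp
  have hIoc : ∫ t in Ioc b a, F' t = G2 a - G2 b := by
    rw [← intervalIntegral.integral_of_le hb]
    exact intervalIntegral.integral_eq_sub_of_hasDerivAt (fun t _ => hFd t)
      (hF'c.intervalIntegrable b a)
  have hG2b : G2 b = 0 := by
    simp [hG2def, hzero b (hgb b (min_le_right _ _))]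
  have hG2a : 0 ≤ G2 a := mul_nonneg (Real.exp_nonneg _) (hpos0 _)
  have htotal : 0 ≤ ∫ t in Iic a, F' t := by
    rw [hsplit, hIic0, hIoc, hG2b]; linarith
  have hlin : ∫ t in Iic a, F' t
      = (-2 * ρ) * (∫ t in Iic a, G2 t) + 2 * ∫ t in Iic a, G1 t := by
    rw [hF'def]
    rw [integral_add ((hG2i.integrableOn).const_mul _) ((hG1i.integrableOn).const_mul _),
      MeasureTheory.integral_const_mul, MeasureTheory.integral_const_mul]
  rw [hlin] at htotal
  have goal2 : ρ * (∫ t in Iic a, G2 t) ≤ ∫ t in Iic a, G1 t := by linarith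
  exact goal2

lemma liftL_coe (M : H →L[ℂ] H) (f : Hw H ρ) :
    ⇑(liftL ρ M f) =ᵐ[wMeasure ρ] fun t => M (f t) :=
  ContinuousLinearMap.coeFn_compLpL M f

lemma re_integrable (u w : Hw H ρ) (s : Set ℝ) :
    IntegrableOn (fun t => (inner ℂ (u t) (w t) : ℂ).re) s (wMeasure ρ) := by
  have h := ((L2.integrable_inner (𝕜 := ℂ) u w).restrict (s := s)).re
  simpa [RCLike.re_to_complex, IntegrableOn] using h

/-- The integration by parts estimate, extended from smooth functions to the
closure `∂₀`. -/

lemma timeDeriv_est {M0 : H →L[ℂ] H} (hsa : IsSelfAdjoint M0)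
    (hpos0 : ∀ x : H, 0 ≤ (inner ℂ x (M0 x) : ℂ).re)
    (hχ : IsCutoff ρ a χ) {D : Hw H ρ →ₗ.[ℂ] Hw H ρ} (hD : IsTimeDeriv ρ D)
    {v u : Hw H ρ} (h : (v, u) ∈ D.graph) :
    ρ * (inner ℂ (χ v) (liftL ρ M0 (χ v)) : ℂ).re ≤ (inner ℂ (χ v) (liftL ρ M0 u) : ℂ).re := by
  have hset : (v, u) ∈ closure
      {p : Hw H ρ × Hw H ρ | ∃ g : ℝ → H, ContDiff ℝ 1 g ∧ HasCompactSupport g ∧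
        ⇑p.1 =ᵐ[wMeasure ρ] g ∧ ⇑p.2 =ᵐ[wMeasure ρ] deriv g} := by
    rw [← hD]; exact h
  have hcont1 : Continuous fun p : Hw H ρ × Hw H ρ =>
      (inner ℂ (χ p.1) (liftL ρ M0 (χ p.1)) : ℂ).re :=
    Complex.continuous_re.comp ((χ.continuous.comp continuous_fst).inner
      ((liftL ρ M0).continuous.comp (χ.continuous.comp continuous_fst)))
  have hcont2 : Continuous fun p : Hw H ρ × Hw H ρ =>
      (inner ℂ (χ p.1) (liftL ρ M0 p.2) : ℂ).re :=
    Complex.continuous_re.comp ((χ.continuous.comp continuous_fst).inner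
      ((liftL ρ M0).continuous.comp continuous_snd))
  have hclosed : IsClosed {p : Hw H ρ × Hw H ρ |
      ρ * (inner ℂ (χ p.1) (liftL ρ M0 (χ p.1)) : ℂ).re
        ≤ (inner ℂ (χ p.1) (liftL ρ M0 p.2) : ℂ).re} :=
    isClosed_le (continuous_const.mul hcont1) hcont2
  refine closure_minimal ?_ hclosed hset
  rintro ⟨p1, p2⟩ ⟨g, hg, hgs, he1, he2⟩
  simp only [Set.mem_setOf_eq]
  have eL : (inner ℂ (χ p1) (liftL ρ M0 (χ p1)) : ℂ).re
      = ∫ t in Iic a, Real.exp (-2 * ρ * t) * (inner ℂ (g t) (M0 (g t)) : ℂ).re := by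
    rw [cutoff_re_inner hχ p1 (liftL ρ M0 (χ p1)),
      ← setIntegral_wMeasure ρ measurableSet_Iic]
    refine setIntegral_congr_ae measurableSet_Iic ?_
    filter_upwards [he1, liftL_coe M0 (χ p1), hχ p1] with t h1 h2 h3 hta
    rw [h2, h3, Set.indicator_of_mem hta, h1]
  have eR : (inner ℂ (χ p1) (liftL ρ M0 p2) : ℂ).re
      = ∫ t in Iic a, Real.exp (-2 * ρ * t) * (inner ℂ (g t) (M0 (deriv g t)) : ℂ).re := by
    rw [cutoff_re_inner hχ p1 (liftL ρ M0 p2), ← setIntegral_wMeasure ρ measurableSet_Iic]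
    refine setIntegral_congr_ae measurableSet_Iic ?_
    filter_upwards [he1, he2, liftL_coe M0 p2] with t h1 h2 h3 hta
    rw [h3, h2, h1]
  rw [eL, eR]
  exact ibp hsa hpos0 ρ a hg hgs

lemma lift_skew {A : H →ₗ.[ℂ] H} (hA : IsSkewSelfAdjointP A)
    {Al : Hw H ρ →ₗ.[ℂ] Hw H ρ} (hAl : IsPointwiseLift ρ A Al) (hχ : IsCutoff ρ a χ)
    {v z : Hw H ρ} (h : (v, z) ∈ Al.graph) :
    (inner ℂ (χ v) z : ℂ).re = 0 := by
  rw [cutoff_re_inner hχ v z]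
  have hae := (hAl v z).mp h
  have : ∫ t in Iic a, (inner ℂ (v t) (z t) : ℂ).re ∂(wMeasure ρ)
      = ∫ t in Iic a, (0:ℝ) ∂(wMeasure ρ) := by
    refine setIntegral_congr_ae measurableSet_Iic ?_
    filter_upwards [hae] with t ht hta
    obtain ⟨hdom, heq⟩ := ht
    rw [← heq]
    exact skew_re hA ⟨v t, hdom⟩
  rw [this]; simp

lemma M1_cut (hχ : IsCutoff ρ a χ) (M : H →L[ℂ] H) (v : Hw H ρ) :
    (inner ℂ (χ v) (liftL ρ M v) : ℂ).re
      = ∫ t in Iic a, (inner ℂ (v t) (M (v t)) : ℂ).re ∂(wMeasure ρ) := by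
  rw [cutoff_re_inner hχ v (liftL ρ M v)]
  refine setIntegral_congr_ae measurableSet_Iic ?_
  filter_upwards [liftL_coe M v] with t h1 hta
  rw [h1]

lemma cut_bound {M0 M1 : H →L[ℂ] H} {c : ℝ}
    (hρ : ∀ x : H, c * ‖x‖ ^ 2 ≤ (inner ℂ x (((ρ : ℂ) • M0 + reOp M1) x) : ℂ).re)
    (hχ : IsCutoff ρ a χ) (v : Hw H ρ) :
    c * ‖χ v‖ ^ 2 ≤ ρ * (inner ℂ (χ v) (liftL ρ M0 (χ v)) : ℂ).re
      + ∫ t in Iic a, (inner ℂ (v t) (M1 (v t)) : ℂ).re ∂(wMeasure ρ) := by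
  have hpoint : ∀ x : H, c * ‖x‖ ^ 2
      ≤ ρ * (inner ℂ x (M0 x) : ℂ).re + (inner ℂ x (M1 x) : ℂ).re := by
    intro x
    have h1 := hρ x
    rw [ContinuousLinearMap.add_apply, inner_add_right, ContinuousLinearMap.smul_apply,
      inner_smul_right, Complex.add_re] at h1
    have h2 : ((ρ:ℂ) * inner ℂ x (M0 x)).re = ρ * (inner ℂ x (M0 x) : ℂ).re := by
      simp [Complex.mul_re]
    rw [h2, reOp_re] at h1
    exact h1
  -- norm squared as an integral
  have hn : ‖χ v‖ ^ 2 = ∫ t in Iic a, ‖v t‖ ^ 2 ∂(wMeasure ρ) := by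
    have h0 := inner_self_eq_norm_sq (𝕜 := ℂ) (χ v)
    rw [RCLike.re_to_complex] at h0
    rw [← h0, cutoff_re_inner hχ v (χ v)]
    refine setIntegral_congr_ae measurableSet_Iic ?_
    filter_upwards [hχ v] with t h1 hta
    rw [h1, Set.indicator_of_mem hta]
    have := inner_self_eq_norm_sq (𝕜 := ℂ) (v t)
    rw [RCLike.re_to_complex] at this
    exact this
  -- rewrite the M0 term as an integral over (-∞, a]
  have e0 : (inner ℂ (χ v) (liftL ρ M0 (χ v)) : ℂ).re
      = ∫ t in Iic a, (inner ℂ (v t) (M0 (v t)) : ℂ).re ∂(wMeasure ρ) := by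
    rw [cutoff_re_inner hχ v (liftL ρ M0 (χ v))]
    refine setIntegral_congr_ae measurableSet_Iic ?_
    filter_upwards [liftL_coe M0 (χ v), hχ v] with t h1 h2 hta
    rw [h1, h2, Set.indicator_of_mem hta]
  -- integrability
  have J0 : IntegrableOn (fun t => (inner ℂ (v t) (M0 (v t)) : ℂ).re) (Iic a) (wMeasure ρ) := by
    refine (re_integrable v (liftL ρ M0 v) (Iic a)).congr ?_
    refine ae_restrict_of_ae ?_
    filter_upwards [liftL_coe M0 v] with t h1
    rw [h1]
  have J1 : IntegrableOn (fun t => (inner ℂ (v t) (M1 (v t)) : ℂ).re) (Iic a) (wMeasure ρ) := by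
    refine (re_integrable v (liftL ρ M1 v) (Iic a)).congr ?_
    refine ae_restrict_of_ae ?_
    filter_upwards [liftL_coe M1 v] with t h1
    rw [h1]
  have Jn : IntegrableOn (fun t => ‖v t‖ ^ 2) (Iic a) (wMeasure ρ) := by
    refine (re_integrable v v (Iic a)).congr ?_
    refine Eventually.of_forall fun t => ?_
    have := inner_self_eq_norm_sq (𝕜 := ℂ) (v t)
    rw [RCLike.re_to_complex] at this
    exact this
  rw [hn, e0, ← MeasureTheory.integral_const_mul, ← MeasureTheory.integral_const_mul,
    ← integral_add (J0.const_mul ρ) J1]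
  refine integral_mono (Jn.const_mul c) ((J0.const_mul ρ).add J1) ?_
  intro t
  exact hpoint (v t)

lemma graph_est {M0 M1 : H →L[ℂ] H} {c : ℝ} (hsa : IsSelfAdjoint M0)
    (hpos0 : ∀ x : H, 0 ≤ (inner ℂ x (M0 x) : ℂ).re)
    (hρ : ∀ x : H, c * ‖x‖ ^ 2 ≤ (inner ℂ x (((ρ : ℂ) • M0 + reOp M1) x) : ℂ).re)
    {A : H →ₗ.[ℂ] H} (hA : IsSkewSelfAdjointP A)
    {D Al : Hw H ρ →ₗ.[ℂ] Hw H ρ} (hD : IsTimeDeriv ρ D) (hAl : IsPointwiseLift ρ A Al)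
    (hχ : IsCutoff ρ a χ) {p : Hw H ρ × Hw H ρ}
    (hp : p ∈ (evo ρ M0 M1 D Al).closure.graph) :
    c * ‖χ p.1‖ ^ 2 ≤ (inner ℂ (χ p.1) p.2 : ℂ).re := by
  have hP : IsClosed {p : Hw H ρ × Hw H ρ |
      c * ‖χ p.1‖ ^ 2 ≤ (inner ℂ (χ p.1) p.2 : ℂ).re} := by
    refine isClosed_le ?_ ?_
    · exact (continuous_const.mul ((continuous_norm.comp
        (χ.continuous.comp continuous_fst)).pow 2))
    · exact Complex.continuous_re.comp
        ((χ.continuous.comp continuous_fst).inner continuous_snd)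
  have hevo : ((evo ρ M0 M1 D Al).graph : Set (Hw H ρ × Hw H ρ)) ⊆
      {p : Hw H ρ × Hw H ρ | c * ‖χ p.1‖ ^ 2 ≤ (inner ℂ (χ p.1) p.2 : ℂ).re} := by
    rintro ⟨v, w⟩ hvw
    have hvw' : (v, w) ∈ (evo ρ M0 M1 D Al).graph := hvw
    rw [LinearPMap.mem_graph_iff] at hvw'
    obtain ⟨y, hy1, hy2⟩ := hvw'
    dsimp only at hy1 hy2
    have hyd : (y : Hw H ρ) ∈ D.domain ⊓ Al.domain := y.2
    have hval : w = liftL ρ M1 (y : Hw H ρ)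
        + (liftL ρ M0 (D ⟨(y : Hw H ρ), hyd.1⟩) + Al ⟨(y : Hw H ρ), hyd.2⟩) := by
      rw [← hy2]; rfl
    simp only [Set.mem_setOf_eq]
    subst hy1
    rw [hval, inner_add_right, inner_add_right, Complex.add_re, Complex.add_re]
    have hskew : (inner ℂ (χ (y : Hw H ρ)) (Al ⟨(y : Hw H ρ), hyd.2⟩) : ℂ).re = 0 :=
      lift_skew hA hAl hχ (LinearPMap.mem_graph Al ⟨(y : Hw H ρ), hyd.2⟩)
    have hDest := timeDeriv_est hsa hpos0 hχ hD
      (LinearPMap.mem_graph D ⟨(y : Hw H ρ), hyd.1⟩)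
    have hM1 := M1_cut hχ M1 (y : Hw H ρ)
    have hcb := cut_bound hρ hχ (y : Hw H ρ)
    rw [hM1]
    linarith
  have hsubset : ((evo ρ M0 M1 D Al).closure.graph : Set (Hw H ρ × Hw H ρ)) ⊆
      closure ((evo ρ M0 M1 D Al).graph : Set (Hw H ρ × Hw H ρ)) := by
    by_cases hcl : (evo ρ M0 M1 D Al).IsClosable
    · rw [← hcl.graph_closure_eq_closure_graph, Submodule.topologicalClosure_coe]
    · rw [LinearPMap.closure_def' hcl]; exact subset_closure
  exact closure_minimal hevo hP (hsubset hp)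

end Helpers

theorem evo_solution_operator_causal
    (H : Type*) [NormedAddCommGroup H] [InnerProductSpace ℂ H] [CompleteSpace H]
    (M0 M1 : H →L[ℂ] H) (hM0 : IsSelfAdjoint M0)
    (A : H →ₗ.[ℂ] H) (hA : IsSkewSelfAdjointP A)
    (c : ℝ) (hc : 0 < c)
    (hpos : ∃ ρ₀ > (0 : ℝ), ∀ ρ ∈ Set.Ioi ρ₀, ∀ x : H,
      c * ‖x‖ ^ 2 ≤ (inner ℂ x (((ρ : ℂ) • M0 + reOp M1) x) : ℂ).re) :
    ∃ ρ₁ > (0 : ℝ), ∀ ρ ∈ Set.Ioi ρ₁, ∀ D Al : Hw H ρ →ₗ.[ℂ] Hw H ρ,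
      IsTimeDeriv ρ D → IsPointwiseLift ρ A Al →
      ∀ S : Hw H ρ →L[ℂ] Hw H ρ, IsInverseOf S (evo ρ M0 M1 D Al).closure →
      ∀ (a : ℝ) (χ : Hw H ρ →L[ℂ] Hw H ρ), IsCutoff ρ a χ →
        χ.comp S = (χ.comp S).comp χ := by
  obtain ⟨ρ₀, hρ₀, hpos'⟩ := hpos
  have hM0nn : ∀ x : H, 0 ≤ (inner ℂ x (M0 x) : ℂ).re := M0_nonneg ⟨ρ₀, hρ₀, hpos'⟩
  refine ⟨ρ₀, hρ₀, ?_⟩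
  intro ρ hρ D Al hD hAl S hS a χ hχ
  refine ContinuousLinearMap.ext fun f => ?_
  simp only [ContinuousLinearMap.comp_apply]
  set g : Hw H ρ := f - χ f with hgdef
  have hTg : (S g, g) ∈ (evo ρ M0 M1 D Al).closure.graph := hS.1 g
  have hest := graph_est (a := a) (χ := χ) hM0 hM0nn (hpos' ρ hρ) hA hD hAl hχ hTg
  dsimp only at hest
  have hzero : (inner ℂ (χ (S g)) g : ℂ).re = 0 := by
    rw [cutoff_re_inner hχ (S g) g]
    have heq : ∫ t in Iic a, (inner ℂ ((S g) t) (g t) : ℂ).re ∂(wMeasure ρ)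
        = ∫ t in Iic a, (0 : ℝ) ∂(wMeasure ρ) := by
      refine setIntegral_congr_ae measurableSet_Iic ?_
      filter_upwards [Lp.coeFn_sub f (χ f), hχ f] with t h1 h2 hta
      have hgt : g t = 0 := by
        rw [hgdef, h1, Pi.sub_apply, h2, Set.indicator_of_mem hta, sub_self]
      rw [hgt, inner_zero_right]
      simp
    rw [heq]
    simp
  have hSg0 : χ (S g) = 0 := by
    have h2 : c * ‖χ (S g)‖ ^ 2 ≤ 0 := by rw [← hzero]; exact hest
    have h4 : ‖χ (S g)‖ ^ 2 ≤ 0 := by nlinarith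
    have h5 : ‖χ (S g)‖ ^ 2 = 0 := le_antisymm h4 (sq_nonneg _)
    have h6 : ‖χ (S g)‖ = 0 := by
      exact pow_eq_zero_iff two_ne_zero |>.mp h5
    exact norm_eq_zero.mp h6
  have hdiff : χ (S f) - χ (S (χ f)) = χ (S g) := by
    rw [hgdef, map_sub, map_sub]
  rw [← sub_eq_zero, hdiff, hSg0]
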